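/- Let c₁, c₂, r₄, r₅, r₆, r₇ be vectors in the Euclidean plane ℝ². Assume ⟪r_i, c₁⟫ > 0 for each i ∈ {4,5,6,7}, and ⟪r₄, c₂⟫ > 0, ⟪r₅, c₂⟫ > 0, ⟪r₆, c₂⟫ ≤ 0, ⟪r₇, c₂⟫ ≤ 0. Then there exists no vector c₃ ∈ ℝ² with ⟪r₄, c₃⟫ > 0, ⟪r₆, c₃⟫ > 0, ⟪r₅, c₃⟫ ≤ 0, and ⟪r₇, c₃⟫ ≤ 0. -/

import Mathlib

open scoped RealInnerProductSpace

lemma inner_two (x y : EuclideanSpace ℝ (Fin 2)) :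
    ⟪x, y⟫ = x 0 * y 0 + x 1 * y 1 := by
  simp [PiLp.inner_apply, Fin.sum_univ_two, mul_comm]

theorem no_separating_vector
    (c₁ c₂ r₄ r₅ r₆ r₇ : EuclideanSpace ℝ (Fin 2))
    (h4 : ⟪r₄, c₁⟫ > 0) (h5 : ⟪r₅, c₁⟫ > 0) (h6 : ⟪r₆, c₁⟫ > 0) (h7 : ⟪r₇, c₁⟫ > 0)
    (h4' : ⟪r₄, c₂⟫ > 0) (h5' : ⟪r₅, c₂⟫ > 0) (h6' : ⟪r₆, c₂⟫ ≤ 0) (h7' : ⟪r₇, c₂⟫ ≤ 0) :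
    ¬ ∃ c₃ : EuclideanSpace ℝ (Fin 2),
      ⟪r₄, c₃⟫ > 0 ∧ ⟪r₆, c₃⟫ > 0 ∧ ⟪r₅, c₃⟫ ≤ 0 ∧ ⟪r₇, c₃⟫ ≤ 0 := by
  rintro ⟨c₃, g4, g6, g5, g7⟩
  set A : ℝ := c₂ 0 * c₃ 1 - c₂ 1 * c₃ 0 with hA
  set B : ℝ := c₃ 0 * c₁ 1 - c₃ 1 * c₁ 0 with hB
  set C : ℝ := c₁ 0 * c₂ 1 - c₁ 1 * c₂ 0 with hC
  have key : ∀ r : EuclideanSpace ℝ (Fin 2),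
      A * ⟪r, c₁⟫ + B * ⟪r, c₂⟫ + C * ⟪r, c₃⟫ = 0 := by
    intro r
    simp only [inner_two, hA, hB, hC]
    ring
  by_cases hCz : C = 0
  · -- c₁, c₂ linearly dependent: contradiction from r₄, r₆
    have bc : ⟪r₄, c₂⟫ * ⟪r₆, c₁⟫ - ⟪r₄, c₁⟫ * ⟪r₆, c₂⟫
        = C * (r₄ 1 * r₆ 0 - r₄ 0 * r₆ 1) := by
      simp only [inner_two, hC]; ring
    rw [hCz, zero_mul] at bc
    have h1 : ⟪r₄, c₂⟫ * ⟪r₆, c₁⟫ > 0 := mul_pos h4' h6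
    have h2 : ⟪r₄, c₁⟫ * ⟪r₆, c₂⟫ ≤ 0 := mul_nonpos_of_nonneg_of_nonpos h4.le h6'
    linarith
  · set α : ℝ := -A / C with hα
    set β : ℝ := -B / C with hβ
    have hg : ∀ r : EuclideanSpace ℝ (Fin 2),
        ⟪r, c₃⟫ = α * ⟪r, c₁⟫ + β * ⟪r, c₂⟫ := by
      intro r
      rw [hα, hβ, div_mul_eq_mul_div, div_mul_eq_mul_div, ← add_div,
        eq_div_iff hCz]
      linear_combination key r
    rw [hg] at g4 g5 g6 g7
    rcases le_or_gt 0 β with hb | hb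
    · -- β ≥ 0 ⇒ α ≤ 0 (from g5) ⇒ g6 ≤ 0, contradiction
      have hα0 : α ≤ 0 := by nlinarith [mul_nonneg hb h5'.le]
      nlinarith [mul_nonpos_of_nonneg_of_nonpos hb h6', mul_nonpos_of_nonpos_of_nonneg hα0 h6.le]
    · -- β < 0 ⇒ α > 0 (from g4) ⇒ g7 > 0, contradiction
      have hα0 : 0 < α := by nlinarith [mul_pos (neg_pos.mpr hb) h4']
      nlinarith [mul_nonneg (neg_pos.mpr hb).le (neg_nonneg.mpr h7'), mul_pos hα0 h7]
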